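/- (Criterion for spontaneous Z₂ violation.) Let B = diag(B₀,−B₁,−B₂,−B₃) with B₀ > B_i, B₃ > B₁ and B₃ > B₂, and let A = (A₀, A₁, A₂, 0) with A₀ > 0, so that V is invariant under the reflection r₃ ↦ −r₃. If A₁²/(B₃−B₁)² + A₂²/(B₃−B₂)² < A₀²/(B₀−B₃)², then every global minimum point ⟨r⟩ of V on the forward light cone has ⟨r₃⟩ ≠ 0. -/
import Mathlib


/-- The forward light cone in ℝ⁴. -/
def lightCone : Set (Fin 4 → ℝ) :=
  {r | 0 ≤ r 0 ∧ (r 0) ^ 2 = (r 1) ^ 2 + (r 2) ^ 2 + (r 3) ^ 2}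

/-- criterion for spontaneous Z₂ violation: with
B = diag(B₀,−B₁,−B₂,−B₃), B₀ > Bᵢ, B₃ > B₁, B₃ > B₂ and A = (A₀,A₁,A₂,0), A₀ > 0,
if A₁²/(B₃−B₁)² + A₂²/(B₃−B₂)² < A₀²/(B₀−B₃)² then every global minimum point of V
on the forward light cone has ⟨r₃⟩ ≠ 0. -/
theorem stmt14 (A₀ A₁ A₂ : ℝ) (hA₀ : 0 < A₀) (B₀ B₁ B₂ B₃ : ℝ)
    (h1 : B₁ < B₀) (h2 : B₂ < B₀) (h3 : B₃ < B₀)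
    (h31 : B₁ < B₃) (h32 : B₂ < B₃)
    (hcaustic : A₁ ^ 2 / (B₃ - B₁) ^ 2 + A₂ ^ 2 / (B₃ - B₂) ^ 2
      < A₀ ^ 2 / (B₀ - B₃) ^ 2) :
    let V : (Fin 4 → ℝ) → ℝ := fun r =>
      -A₀ * r 0 + A₁ * r 1 + A₂ * r 2
        + (1 / 2 : ℝ) *
          (B₀ * (r 0) ^ 2 - B₁ * (r 1) ^ 2 - B₂ * (r 2) ^ 2 - B₃ * (r 3) ^ 2)
    ∀ p ∈ lightCone, (∀ r ∈ lightCone, V p ≤ V r) → p 3 ≠ 0 := by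
  intro V p hp hmin hp3
  obtain ⟨hp0, hpc⟩ := hp
  have hc0 : (0:ℝ) < B₀ - B₃ := by linarith
  have hc1 : (0:ℝ) < B₃ - B₁ := by linarith
  have hc2 : (0:ℝ) < B₃ - B₂ := by linarith
  set a := A₀ / (B₀ - B₃) with ha
  set b := A₁ / (B₃ - B₁) with hb
  set c := A₂ / (B₃ - B₂) with hc
  have hs : b ^ 2 + c ^ 2 < a ^ 2 := by
    rw [ha, hb, hc, div_pow, div_pow, div_pow]; exact hcaustic
  have hspos : (0:ℝ) < a ^ 2 - b ^ 2 - c ^ 2 := by linarith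
  have hsq : Real.sqrt (a ^ 2 - b ^ 2 - c ^ 2) ^ 2 = a ^ 2 - b ^ 2 - c ^ 2 :=
    Real.sq_sqrt hspos.le
  have hA0 : A₀ = (B₀ - B₃) * a := by rw [ha]; field_simp
  have hA1 : A₁ = (B₃ - B₁) * b := by rw [hb]; field_simp
  have hA2 : A₂ = (B₃ - B₂) * c := by rw [hc]; field_simp
  have hapos : 0 < a := div_pos hA₀ hc0
  set q : Fin 4 → ℝ := ![a, -b, -c, Real.sqrt (a ^ 2 - b ^ 2 - c ^ 2)] with hq
  have hq0 : q 0 = a := rfl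
  have hq1 : q 1 = -b := rfl
  have hq2 : q 2 = -c := rfl
  have hq3 : q 3 = Real.sqrt (a ^ 2 - b ^ 2 - c ^ 2) := rfl
  have hqcone : q ∈ lightCone := by
    constructor
    · rw [hq0]; exact hapos.le
    · rw [hq0, hq1, hq2, hq3, hsq]; ring
  have hle := hmin q hqcone
  have hp0sq : p 0 ^ 2 = p 1 ^ 2 + p 2 ^ 2 := by rw [hp3] at hpc; linarith [hpc]
  have key : V p - V q = (1/2) * ((B₀ - B₃) * (p 0 - a) ^ 2
      + (B₃ - B₁) * (p 1 + b) ^ 2 + (B₃ - B₂) * (p 2 + c) ^ 2) := by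
    simp only [V, hq0, hq1, hq2, hq3, hp3, hA0, hA1, hA2]
    linear_combination (B₃ / 2) * hp0sq + (B₃ / 2) * hsq
  have hD : 0 < (B₀ - B₃) * (p 0 - a) ^ 2
      + (B₃ - B₁) * (p 1 + b) ^ 2 + (B₃ - B₂) * (p 2 + c) ^ 2 := by
    by_contra h
    push_neg at h
    have n0 : 0 ≤ (B₀ - B₃) * (p 0 - a) ^ 2 := by positivity
    have n1 : 0 ≤ (B₃ - B₁) * (p 1 + b) ^ 2 := by positivity
    have n2 : 0 ≤ (B₃ - B₂) * (p 2 + c) ^ 2 := by positivity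
    have z0 : (p 0 - a) ^ 2 = 0 := by
      have h0 : (B₀ - B₃) * (p 0 - a) ^ 2 = 0 := le_antisymm (by linarith) n0
      rcases mul_eq_zero.mp h0 with h' | h'
      · exact absurd h' (ne_of_gt hc0)
      · exact h'
    have z1 : (p 1 + b) ^ 2 = 0 := by
      have h0 : (B₃ - B₁) * (p 1 + b) ^ 2 = 0 := le_antisymm (by linarith) n1
      rcases mul_eq_zero.mp h0 with h' | h'
      · exact absurd h' (ne_of_gt hc1)
      · exact h'
    have z2 : (p 2 + c) ^ 2 = 0 := by
      have h0 : (B₃ - B₂) * (p 2 + c) ^ 2 = 0 := le_antisymm (by linarith) n2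
      rcases mul_eq_zero.mp h0 with h' | h'
      · exact absurd h' (ne_of_gt hc2)
      · exact h'
    have e0 : p 0 - a = 0 := by
      simpa using sq_eq_zero_iff.mp (by simpa [sq] using z0)
    have e1 : p 1 + b = 0 := by
      simpa using sq_eq_zero_iff.mp (by simpa [sq] using z1)
    have e2 : p 2 + c = 0 := by
      simpa using sq_eq_zero_iff.mp (by simpa [sq] using z2)
    have hp0a : p 0 = a := by linarith
    have hp1b : p 1 = -b := by linarith
    have hp2c : p 2 = -c := by linarith
    rw [hp0a, hp1b, hp2c] at hp0sq
    have : a ^ 2 = b ^ 2 + c ^ 2 := by linear_combination hp0sq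
    linarith
  have hlt : 0 < V p - V q := by rw [key]; linarith
  linarith
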